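/- arXiv:2507.21646 — 2 statements merged into one kernel-verified Lean document; each statement's English description precedes it below -/
import Mathlib

section
/- Existence of continuous selections staying in an excess-continuous prox-regular moving set: let r > 0 and C : [0,T] → closed r-prox-regular subsets of a real Hilbert space H satisfying: for all ε > 0 there is δ > 0 such that 0 ≤ t−s < δ implies e(C(s),C(t)) < ε. Then for every y₀ ∈ C(0) the catching-up approximants (right-continuous step functions y_n built by successive projections along nested subdivisions with mesh δ_n → 0 chosen so that e(C(s),C(t)) < ε_n whenever 0 ≤ t−s ≤ δ_n with ∑ε_n < ∞), if they satisfy sup_n V(y_n,[0,T]) < ∞, converge uniformly on [0,T] to a continuous function y of bounded variation with y(0)=y₀ and y(t) ∈ C(t) for all t ∈ [0,T]. -/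
open Metric Set Filter
open scoped RealInnerProductSpace Topology

variable {H : Type*} [NormedAddCommGroup H] [InnerProductSpace ℝ H]

/-- The set of nearest points of `K` to `y`. -/
noncomputable def projSet (K : Set H) (y : H) : Set H :=
  {x | x ∈ K ∧ ‖x - y‖ = Metric.infDist y K}

/-- The proximal normal cone to `K` at `x`. -/
def proxNormalCone (K : Set H) (x : H) : Set H :=
  {u | ∃ l : ℝ, 0 ≤ l ∧ ∃ y : H, x ∈ projSet K y ∧ u = l • (y - x)}

/-- `K` is `r`-prox-regular. -/
def IsProxRegular (r : ℝ) (K : Set H) : Prop :=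
  ∀ y : H, 0 < Metric.infDist y K → Metric.infDist y K < r →
    (projSet K y).Nonempty ∧
      ∀ x ∈ projSet K y, x ∈ projSet K (x + (r / ‖y - x‖) • (y - x))

/-- The excess of `A` over `B`: `e(A,B) = sup_{a ∈ A} d(a,B)`. -/
noncomputable def excess (A B : Set H) : ENNReal := ⨆ a ∈ A, EMetric.infEdist a B

lemma infDist_lt_of_excess_lt {A B : Set H} {a : H} (ha : a ∈ A) {e : ℝ}
    (h : excess A B < ENNReal.ofReal e) : Metric.infDist a B < e := by
  have h1 : EMetric.infEdist a B < ENNReal.ofReal e :=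
    lt_of_le_of_lt (le_iSup₂ (f := fun a (_ : a ∈ A) => EMetric.infEdist a B) a ha) h
  have hne : EMetric.infEdist a B ≠ ⊤ := h1.ne_top
  have he : 0 < e := by
    by_contra hc
    push_neg at hc
    rw [ENNReal.ofReal_eq_zero.2 hc] at h1
    exact (not_lt_bot h1)
  rw [Metric.infDist]
  calc (EMetric.infEdist a B).toReal < (ENNReal.ofReal e).toReal :=
        (ENNReal.toReal_lt_toReal hne ENNReal.ofReal_ne_top).2 h1
    _ = e := ENNReal.toReal_ofReal he.le

/-- Hypomonotonicity-type estimate for prox-regular sets. -/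
lemma hypo {r : ℝ} (hr : 0 < r) {K : Set H} (hK : IsProxRegular r K) {u p : H}
    (hp : p ∈ projSet K u) (hlt : Metric.infDist u K < r) :
    ∀ w ∈ K, ⟪u - p, w - p⟫ ≤ (‖p - u‖ / (2 * r)) * ‖w - p‖ ^ 2 := by
  intro w hw
  rcases eq_or_lt_of_le (Metric.infDist_nonneg (x := u) (s := K)) with h0 | h0
  · -- infDist = 0, so p = u
    have : ‖p - u‖ = 0 := by rw [hp.2, ← h0]
    have hpu : p = u := by rwa [norm_sub_eq_zero_iff] at this
    simp only [hpu, sub_self, inner_zero_left]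
    positivity
  · have key := (hK u h0 hlt).2 p hp
    set c := ‖u - p‖ with hc
    have hcpos : 0 < c := by
      rw [hc, norm_sub_rev, hp.2]; exact h0
    have hpu : ‖p - u‖ = c := by rw [hc, norm_sub_rev]
    -- key : p ∈ projSet K (p + (r/c) • (u - p))
    have hdist : ‖p - (p + (r / c) • (u - p))‖ = r := by
      simp only [sub_add_eq_sub_sub, sub_self, zero_sub, norm_neg, norm_smul]
      rw [Real.norm_eq_abs, abs_of_pos (by positivity)]
      field_simp
      exact hc.symm
    have hle : ‖p - (p + (r / c) • (u - p))‖ ≤ ‖w - (p + (r / c) • (u - p))‖ := by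
      rw [key.2]
      calc Metric.infDist (p + (r / c) • (u - p)) K ≤ dist (p + (r / c) • (u - p)) w :=
            Metric.infDist_le_dist_of_mem hw
        _ = ‖w - (p + (r / c) • (u - p))‖ := by rw [dist_eq_norm']
    rw [hdist] at hle
    have hsq : r ^ 2 ≤ ‖w - p - (r / c) • (u - p)‖ ^ 2 := by
      rw [show w - (p + (r / c) • (u - p)) = w - p - (r / c) • (u - p) by abel] at hle
      nlinarith [norm_nonneg (w - p - (r / c) • (u - p))]
    have hexp : ‖w - p - (r / c) • (u - p)‖ ^ 2
        = ‖w - p‖ ^ 2 - 2 * (r / c) * ⟪w - p, u - p⟫ + (r / c) ^ 2 * c ^ 2 := by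
      rw [norm_sub_sq_real, norm_smul, real_inner_smul_right]
      rw [Real.norm_eq_abs, abs_of_pos (by positivity : (0:ℝ) < r / c)]
      ring
    have hrc : (r / c) ^ 2 * c ^ 2 = r ^ 2 := by field_simp
    rw [hexp, hrc] at hsq
    have h2 : 2 * (r / c) * ⟪w - p, u - p⟫ ≤ ‖w - p‖ ^ 2 := by linarith
    rw [real_inner_comm] at h2
    rw [hpu]
    have hrpos : 0 < 2 * (r / c) := by positivity
    calc ⟪u - p, w - p⟫ ≤ ‖w - p‖ ^ 2 / (2 * (r / c)) := by
          rw [le_div_iff₀ hrpos]; linarith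
      _ = (c / (2 * r)) * ‖w - p‖ ^ 2 := by field_simp <;> ring

lemma exists_close_point {r : ℝ} (hr : 0 < r) {K : Set H} (hcl : IsClosed K)
    (hne : K.Nonempty) (hK : IsProxRegular r K) {q : H} (h : Metric.infDist q K < r) :
    ∃ z ∈ K, ‖z - q‖ = Metric.infDist q K := by
  rcases eq_or_lt_of_le (Metric.infDist_nonneg (x := q) (s := K)) with h0 | h0
  · exact ⟨q, (hcl.mem_iff_infDist_zero hne).2 h0.symm, by simp [← h0]⟩
  · obtain ⟨z, hz⟩ := (hK q h0 h).1
    exact ⟨z, hz.1, hz.2⟩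

lemma sq_norm_sub_rel (u p q : H) :
    ‖p - q‖ ^ 2 = ‖u - q‖ ^ 2 - ‖u - p‖ ^ 2 + 2 * ⟪u - p, q - p⟫ := by
  have h : p - q = (u - q) - (u - p) := by abel
  rw [h, norm_sub_sq_real]
  have h3 : u - q = (u - p) + (p - q) := by abel
  have h2 : ⟪u - q, u - p⟫ = ‖u - p‖ ^ 2 + ⟪p - q, u - p⟫ := by
    rw [h3, inner_add_left, real_inner_self_eq_norm_sq]
  have h4 : ⟪u - p, q - p⟫ = - ⟪p - q, u - p⟫ := by
    rw [real_inner_comm, show q - p = -(p - q) by abel, inner_neg_left]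
  rw [h2, h4]; ring

lemma gron_aux {x A B : ℝ} (hx0 : 0 ≤ x) (hx : x ≤ 1/2) (h : A ^ 2 * (1 - x) ≤ B) :
    A ^ 2 ≤ B * Real.exp (2 * x) := by
  have h1 : 1 + 2 * x ≤ Real.exp (2 * x) := by
    have := Real.add_one_le_exp (2 * x); linarith
  have h2 : 1 ≤ (1 - x) * Real.exp (2 * x) := by nlinarith
  have h3 := mul_le_mul_of_nonneg_left h2 (sq_nonneg A)
  have h4 := mul_le_mul_of_nonneg_right h (Real.exp_pos (2 * x)).le
  nlinarith

set_option maxHeartbeats 4000000 in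
theorem stmt_16 [CompleteSpace H] (r T : ℝ) (hr : 0 < r) (hT : 0 < T)
    (C : ℝ → Set H)
    (hC : ∀ t ∈ Set.Icc (0 : ℝ) T,
      IsClosed (C t) ∧ (C t).Nonempty ∧ IsProxRegular r (C t))
    -- excess-continuity of the moving set
    (hcont : ∀ ε : ℝ, 0 < ε → ∃ δ : ℝ, 0 < δ ∧ ∀ s t : ℝ, 0 ≤ s → s ≤ t →
      t ≤ T → t - s < δ → excess (C s) (C t) < ENNReal.ofReal ε)
    (y₀ : H) (hy₀ : y₀ ∈ C 0)
    -- sequences `ε_n`, `δ_n`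
    (ε δ : ℕ → ℝ)
    (hε : ∀ n, 0 < ε (n + 1) ∧ ε (n + 1) < ε n ∧ ε n < r)
    (hεsum : Summable ε)
    (hδpos : ∀ n, 0 < δ (n + 1) ∧ δ (n + 1) < δ n)
    (hδ0 : Filter.Tendsto δ Filter.atTop (nhds 0))
    (hδε : ∀ n, ∀ s t : ℝ, 0 ≤ s → s ≤ t → t ≤ T → t - s ≤ δ n →
      excess (C s) (C t) < ENNReal.ofReal (ε n))
    -- nested subdivisions `0 = t^n_0 < … < t^n_{J n} = T` with mesh `≤ δ n`
    (J : ℕ → ℕ) (hJ : ∀ n, 0 < J n)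
    (t : ℕ → ℕ → ℝ)
    (ht0 : ∀ n, t n 0 = 0) (htJ : ∀ n, t n (J n) = T)
    (htmono : ∀ n, ∀ j < J n, t n j < t n (j + 1))
    (htmesh : ∀ n, ∀ j < J n, t n (j + 1) - t n j ≤ δ n)
    (hnested : ∀ n, ∀ j ≤ J n, ∃ k ≤ J (n + 1), t (n + 1) k = t n j)
    -- the catching-up points `y^n_j`
    (Y : ℕ → ℕ → H) (hY0 : ∀ n, Y n 0 = y₀)
    (hYproj : ∀ n, ∀ j : ℕ, 1 ≤ j → j ≤ J n →
      Y n j ∈ projSet (C (t n j)) (Y n (j - 1)))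
    -- the right-continuous piecewise-constant interpolants `y_n`
    (yn : ℕ → ℝ → H)
    (hyn0 : ∀ n, yn n 0 = y₀)
    (hynstep : ∀ n, ∀ j : ℕ, 1 ≤ j → j ≤ J n →
      ∀ s ∈ Set.Ico (t n (j - 1)) (t n j), yn n s = Y n (j - 1))
    (hynT : ∀ n, yn n T = Y n (J n))
    -- uniformly bounded variations
    (hVar : ∃ V : ℝ, ∀ n, eVariationOn (yn n) (Set.Icc 0 T) ≤ ENNReal.ofReal V) :
    ∃ y : ℝ → H, ContinuousOn y (Set.Icc 0 T) ∧
      BoundedVariationOn y (Set.Icc 0 T) ∧ y 0 = y₀ ∧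
      (∀ s ∈ Set.Icc (0 : ℝ) T, y s ∈ C s) ∧
      TendstoUniformlyOn yn y Filter.atTop (Set.Icc 0 T) := by
  classical
  set I : Set ℝ := Set.Icc 0 T with hI
  -- ε facts
  have hεpos : ∀ n, 0 < ε n := fun n => lt_trans (hε n).1 (hε n).2.1
  have hεanti : StrictAnti ε := strictAnti_nat_of_succ_lt fun n => (hε n).2.1
  have hεr : ∀ n, ε n < r := fun n => (hε n).2.2
  have hεto : Tendsto ε atTop (𝓝 0) := hεsum.tendsto_atTop_zero
  obtain ⟨N, hN⟩ : ∃ N : ℕ, ∀ n, N ≤ n → ε n ≤ r / 4 := by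
    have := hεto.eventually_le_const (show (0:ℝ) < r/4 by linarith)
    exact eventually_atTop.1 this
  -- variation bound
  obtain ⟨V₀, hV₀⟩ := hVar
  set V : ℝ := max V₀ 0 with hVdef
  have hVnn : 0 ≤ V := le_max_right _ _
  have hV : ∀ n, eVariationOn (yn n) I ≤ ENNReal.ofReal V := fun n =>
    (hV₀ n).trans (ENNReal.ofReal_le_ofReal (le_max_left _ _))
  -- grid facts
  have htmono' : ∀ n j k, j ≤ k → k ≤ J n → t n j ≤ t n k := by
    intro n j k hjk hkJ
    induction k, hjk using Nat.le_induction with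
    | base => exact le_rfl
    | succ k hk ih =>
      exact (ih (by omega)).trans (htmono n k (by omega)).le
  have hstrict : ∀ n j k, j < k → k ≤ J n → t n j < t n k := by
    intro n j k hjk hkJ
    exact lt_of_lt_of_le (htmono n j (by omega)) (htmono' n (j+1) k (by omega) hkJ)
  have horder : ∀ n j k, j ≤ J n → k ≤ J n → t n j < t n k → j < k := by
    intro n j k hj hk hlt
    by_contra hc
    push_neg at hc
    exact absurd (htmono' n k j hc hj) (not_le.2 hlt)
  have htnn : ∀ n j, j ≤ J n → 0 ≤ t n j := by
    intro n j hj
    have := htmono' n 0 j (Nat.zero_le _) hj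
    rwa [ht0] at this
  have htle : ∀ n j, j ≤ J n → t n j ≤ T := by
    intro n j hj
    have := htmono' n j (J n) hj le_rfl
    rwa [htJ] at this
  have htmem : ∀ n j, j ≤ J n → t n j ∈ I := fun n j hj => ⟨htnn n j hj, htle n j hj⟩
  -- Y facts
  have hYmem : ∀ n j, j ≤ J n → Y n j ∈ C (t n j) := by
    intro n j
    induction j with
    | zero => intro _; rw [ht0, hY0]; exact hy₀
    | succ j _ => intro hj; exact (hYproj n (j+1) (by omega) hj).1
  have hjump : ∀ n j, 1 ≤ j → j ≤ J n →
      ‖Y n j - Y n (j - 1)‖ = Metric.infDist (Y n (j-1)) (C (t n j)) ∧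
      Metric.infDist (Y n (j-1)) (C (t n j)) < ε n := by
    intro n j h1 h2
    have hj1 : j - 1 + 1 = j := by omega
    constructor
    · exact (hYproj n j h1 h2).2
    · refine infDist_lt_of_excess_lt (hYmem n (j-1) (by omega)) ?_
      refine hδε n (t n (j-1)) (t n j) (htnn n (j-1) (by omega))
        (htmono' n (j-1) j (by omega) h2) (htle n j h2) ?_
      have := htmesh n (j-1) (by omega)
      rwa [hj1] at this
  -- locating points
  have hloc : ∀ n s, 0 ≤ s → s < T → ∃ j, 1 ≤ j ∧ j ≤ J n ∧ t n (j-1) ≤ s ∧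
      s < t n j ∧ yn n s = Y n (j-1) := by
    intro n s hs0 hsT
    set P : ℕ → Prop := fun j => t n j ≤ s with hP
    have hP0 : P 0 := by rw [hP]; simpa [ht0] using hs0
    set j₀ := Nat.findGreatest P (J n) with hj₀
    have hj₀le : j₀ ≤ J n := Nat.findGreatest_le (J n)
    have hspec : P j₀ := Nat.findGreatest_spec (Nat.zero_le _) hP0
    have hj₀lt : j₀ < J n := by
      rcases eq_or_lt_of_le hj₀le with h | h
      · exfalso
        have := hspec
        rw [hP] at this; rw [h, htJ] at this
        exact absurd this (not_le.2 hsT)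
      · exact h
    have hnot : ¬ P (j₀ + 1) := Nat.findGreatest_is_greatest (Nat.lt_succ_self j₀) hj₀lt
    rw [hP] at hnot hspec
    push_neg at hnot
    refine ⟨j₀ + 1, by omega, hj₀lt, by simpa using hspec, by simpa using hnot, ?_⟩
    have := hynstep n (j₀+1) (by omega) hj₀lt s ⟨by simpa using hspec, by simpa using hnot⟩
    simpa using this
  have hgrid : ∀ n j, j ≤ J n → yn n (t n j) = Y n j := by
    intro n j hj
    rcases eq_or_lt_of_le hj with h | h
    · rw [h, htJ]; exact hynT n
    · have := hynstep n (j+1) (by omega) h (t n j)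
        ⟨by simp, htmono n j h⟩
      simpa using this
  -- nested grids
  have hsub : ∀ n m, n ≤ m → ∀ j, j ≤ J n → ∃ k, k ≤ J m ∧ t m k = t n j := by
    intro n m hnm
    induction m, hnm using Nat.le_induction with
    | base => exact fun j hj => ⟨j, hj, rfl⟩
    | succ m hm ih =>
      intro j hj
      obtain ⟨k, hk, hkeq⟩ := ih j hj
      obtain ⟨k', hk', hk'eq⟩ := hnested m k hk
      exact ⟨k', hk', by rw [hk'eq, hkeq]⟩
  -- same-cell lemma
  have hsame : ∀ n m, n ≤ m → ∀ k, k < J m → ∀ s, t m k ≤ s → s < t m (k+1) →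
      yn n s = yn n (t m k) := by
    intro n m hnm k hk s hks hsk
    have hkT : t m k < T := lt_of_lt_of_le (htmono m k hk) (htle m (k+1) hk)
    obtain ⟨j, hj1, hjJ, hjle, hjlt, hq⟩ := hloc n (t m k) (htnn m k hk.le) hkT
    obtain ⟨k', hk', hk'eq⟩ := hsub n m hnm j hjJ
    have hkk' : k < k' := horder m k k' hk.le hk' (by rw [hk'eq]; exact hjlt)
    have hτ'j : t m (k+1) ≤ t n j := by
      rw [← hk'eq]; exact htmono' m (k+1) k' (by omega) hk'
    have h1 : yn n s = Y n (j-1) :=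
      hynstep n j hj1 hjJ s ⟨le_trans hjle hks, lt_of_lt_of_le hsk hτ'j⟩
    rw [h1, hq]
  -- sum bound
  have hsum : ∀ (f : ℝ → H), eVariationOn f I ≤ ENNReal.ofReal V → ∀ (m K : ℕ), K ≤ J m →
      ∑ i ∈ Finset.range K, ‖f (t m (i+1)) - f (t m i)‖ ≤ V := by
    intro f hf m K hK
    set u : ℕ → ℝ := fun i => t m (min i K) with hu
    have hum : Monotone u := by
      intro a b hab
      exact htmono' m (min a K) (min b K) (by omega) (le_trans (min_le_right _ _) hK)
    have hus : ∀ i, u i ∈ I := fun i => htmem m _ (le_trans (min_le_right _ _) hK)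
    have h1 : ∑ i ∈ Finset.range K, edist (f (u (i+1))) (f (u i)) ≤ eVariationOn f I :=
      eVariationOn.sum_le (f := f) (n := K) hum hus
    have h2 : ∑ i ∈ Finset.range K, edist (f (u (i+1))) (f (u i))
        = ENNReal.ofReal (∑ i ∈ Finset.range K, ‖f (t m (i+1)) - f (t m i)‖) := by
      rw [ENNReal.ofReal_sum_of_nonneg (fun i _ => norm_nonneg _)]
      refine Finset.sum_congr rfl fun i hi => ?_
      have hiK : i < K := Finset.mem_range.1 hi
      have e1 : u i = t m i := by
        show t m (min i K) = t m i
        rw [Nat.min_eq_left hiK.le]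
      have e2 : u (i+1) = t m (i+1) := by
        show t m (min (i+1) K) = t m (i+1)
        rw [Nat.min_eq_left hiK]
      rw [e1, e2, edist_dist, dist_eq_norm]
    rw [h2] at h1
    exact (ENNReal.ofReal_le_ofReal_iff hVnn).1 (h1.trans hf)
  -- THE key estimate
  have key : ∀ n, N ≤ n → ∀ m, n ≤ m → ∀ k, k ≤ J m →
      ‖Y m k - yn n (t m k)‖^2 ≤ Real.exp (6*V/r) * (3 * ε n * V) := by
    intro n hn m hnm
    have hεn4 : ε n ≤ r/4 := hN n hn
    have hεm : ε m ≤ ε n := hεanti.antitone hnm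
    set S : ℕ → ℝ := fun K => ∑ i ∈ Finset.range K, ‖Y m (i+1) - Y m i‖ with hS
    set D : ℕ → ℝ := fun K => ∑ i ∈ Finset.range K, ‖yn n (t m (i+1)) - yn n (t m i)‖ with hD
    set G : ℕ → ℝ := fun K => ∑ i ∈ Finset.range K,
      (2*(2*‖Y m (i+1) - Y m i‖/r) + 2*(‖yn n (t m (i+1)) - yn n (t m i)‖/r)) with hG
    have hS0 : ∀ K, 0 ≤ S K := fun K => Finset.sum_nonneg fun i _ => norm_nonneg _
    have hG0 : ∀ K, 0 ≤ G K := fun K => Finset.sum_nonneg fun i _ => by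
      have h1 : (0:ℝ) ≤ 2*‖Y m (i+1) - Y m i‖/r := div_nonneg (by positivity) hr.le
      have h2 : (0:ℝ) ≤ ‖yn n (t m (i+1)) - yn n (t m i)‖/r := div_nonneg (norm_nonneg _) hr.le
      linarith
    have inv : ∀ k, k ≤ J m → ‖Y m k - yn n (t m k)‖^2 ≤ Real.exp (G k) * (3 * ε n * S k) := by
      intro k
      induction k with
      | zero =>
        intro _
        rw [ht0, hyn0, hY0, sub_self, norm_zero]
        have : S 0 = 0 := by simp [hS]
        rw [this]
        simp
      | succ k ih =>
        intro hk1
        have hkJ : k ≤ J m := by omega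
        have hklt : k < J m := by omega
        have IH := ih hkJ
        have hr0 : r ≠ 0 := ne_of_gt hr
        have hττ' : t m k < t m (k+1) := htmono m k hklt
        have hτI : t m k ∈ I := htmem m k hkJ
        have hτ'I : t m (k+1) ∈ I := htmem m (k+1) hk1
        have hτT : t m k < T := lt_of_lt_of_le hττ' hτ'I.2
        obtain ⟨hCcl, hCne, hCpr⟩ := hC (t m (k+1)) hτ'I
        have hu : Y m k ∈ C (t m k) := hYmem m k hkJ
        have hpP : Y m (k+1) ∈ projSet (C (t m (k+1))) (Y m k) := by
          have := hYproj m (k+1) (by omega) hk1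
          simpa using this
        have hpC : Y m (k+1) ∈ C (t m (k+1)) := hpP.1
        have hcval : ‖Y m (k+1) - Y m k‖ = Metric.infDist (Y m k) (C (t m (k+1))) := hpP.2
        have hclt : Metric.infDist (Y m k) (C (t m (k+1))) < ε m :=
          infDist_lt_of_excess_lt hu
            (hδε m (t m k) (t m (k+1)) hτI.1 hττ'.le hτ'I.2 (htmesh m k hklt))
        have hcεn : ‖Y m (k+1) - Y m k‖ < ε n := by
          rw [hcval]; exact lt_of_lt_of_le hclt hεm
        have hcr4 : ‖Y m (k+1) - Y m k‖ ≤ r/4 := le_trans hcεn.le hεn4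
        obtain ⟨j, hj1, hjJ, hjle, hjlt, hq⟩ := hloc n (t m k) hτI.1 hτT
        obtain ⟨k', hk'J, hk'eq⟩ := hsub n m hnm j hjJ
        have hkk' : k < k' := horder m k k' hkJ hk'J (by rw [hk'eq]; exact hjlt)
        have hτ'j : t m (k+1) ≤ t n j := by
          rw [← hk'eq]; exact htmono' m (k+1) k' (by omega) hk'J
        have hqC : yn n (t m k) ∈ C (t n (j-1)) := by
          rw [hq]; exact hYmem n (j-1) (by omega)
        have hqd : Metric.infDist (yn n (t m k)) (C (t m (k+1))) < ε n := by
          refine infDist_lt_of_excess_lt hqC ?_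
          refine hδε n (t n (j-1)) (t m (k+1)) (htnn n (j-1) (by omega))
            (le_trans hjle hττ'.le) hτ'I.2 ?_
          have hmesh := htmesh n (j-1) (by omega)
          have hj' : j - 1 + 1 = j := by omega
          rw [hj'] at hmesh
          linarith
        obtain ⟨z, hzC, hzval⟩ :=
          exists_close_point hr hCcl hCne hCpr (lt_trans hqd (hεr n))
        have hzq : ‖z - yn n (t m k)‖ ≤ ε n := by rw [hzval]; exact hqd.le
        have hypoA := hypo hr hCpr hpP (lt_trans hclt (hεr m))
        -- abbreviations (plain real numbers)
        have hcnn : (0:ℝ) ≤ ‖Y m (k+1) - Y m k‖ := norm_nonneg _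
        have hρnn : (0:ℝ) ≤ ‖Y m k - yn n (t m k)‖ := norm_nonneg _
        have ha'nn : (0:ℝ) ≤ ‖Y m (k+1) - yn n (t m k)‖ := norm_nonneg _
        have hεnn : 0 < ε n := hεpos n
        -- Step A : estimate ‖p - q‖²
        have hidA : ‖Y m (k+1) - yn n (t m k)‖^2
            = ‖Y m k - yn n (t m k)‖^2 - ‖Y m k - Y m (k+1)‖^2
              + 2*⟪Y m k - Y m (k+1), yn n (t m k) - Y m (k+1)⟫ :=
          sq_norm_sub_rel (Y m k) (Y m (k+1)) (yn n (t m k))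
        have hup : ‖Y m k - Y m (k+1)‖ = ‖Y m (k+1) - Y m k‖ := norm_sub_rev _ _
        have hinn : ⟪Y m k - Y m (k+1), yn n (t m k) - Y m (k+1)⟫
            ≤ ‖Y m (k+1) - Y m k‖ * ε n + (‖Y m (k+1) - Y m k‖/(2*r))
              * (‖Y m (k+1) - yn n (t m k)‖ + ε n)^2 := by
          have h5 : ⟪Y m k - Y m (k+1), yn n (t m k) - Y m (k+1)⟫
              = ⟪Y m k - Y m (k+1), yn n (t m k) - z⟫
                + ⟪Y m k - Y m (k+1), z - Y m (k+1)⟫ := by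
            rw [← inner_add_right]; congr 1; abel
          have h1 : ⟪Y m k - Y m (k+1), yn n (t m k) - z⟫ ≤ ‖Y m (k+1) - Y m k‖ * ε n := by
            calc ⟪Y m k - Y m (k+1), yn n (t m k) - z⟫
                ≤ ‖Y m k - Y m (k+1)‖ * ‖yn n (t m k) - z‖ := real_inner_le_norm _ _
              _ ≤ ‖Y m (k+1) - Y m k‖ * ε n := by
                  rw [hup]
                  refine mul_le_mul_of_nonneg_left ?_ hcnn
                  rw [norm_sub_rev]; exact hzq
          have h2 := hypoA z hzC
          have h3 : ‖z - Y m (k+1)‖ ≤ ‖Y m (k+1) - yn n (t m k)‖ + ε n := by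
            calc ‖z - Y m (k+1)‖ = ‖(z - yn n (t m k)) + (yn n (t m k) - Y m (k+1))‖ := by
                  congr 1; abel
              _ ≤ ‖z - yn n (t m k)‖ + ‖yn n (t m k) - Y m (k+1)‖ := norm_add_le _ _
              _ ≤ ε n + ‖Y m (k+1) - yn n (t m k)‖ := by
                  rw [norm_sub_rev (yn n (t m k))]
                  exact add_le_add_left hzq _
              _ = ‖Y m (k+1) - yn n (t m k)‖ + ε n := by ring
          have h4 : ‖z - Y m (k+1)‖^2 ≤ (‖Y m (k+1) - yn n (t m k)‖ + ε n)^2 :=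
            pow_le_pow_left₀ (norm_nonneg _) h3 2
          have h6 : (‖Y m (k+1) - Y m k‖/(2*r)) * ‖z - Y m (k+1)‖^2
              ≤ (‖Y m (k+1) - Y m k‖/(2*r)) * (‖Y m (k+1) - yn n (t m k)‖ + ε n)^2 :=
            mul_le_mul_of_nonneg_left h4 (div_nonneg hcnn (by linarith))
          linarith [h5.le, h5.ge]
        have hA : ‖Y m (k+1) - yn n (t m k)‖^2 * (1 - 2*‖Y m (k+1) - Y m k‖/r)
            ≤ ‖Y m k - yn n (t m k)‖^2 + 3 * ε n * ‖Y m (k+1) - Y m k‖ := by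
          have hidAr : r * ‖Y m (k+1) - yn n (t m k)‖^2
              = r * ‖Y m k - yn n (t m k)‖^2 - r * ‖Y m (k+1) - Y m k‖^2
                + r * (2*⟪Y m k - Y m (k+1), yn n (t m k) - Y m (k+1)⟫) := by
            rw [hup] at hidA
            linear_combination r * hidA
          have hmulA : 2*r*⟪Y m k - Y m (k+1), yn n (t m k) - Y m (k+1)⟫
              ≤ 2*r*(‖Y m (k+1) - Y m k‖ * ε n)
                + ‖Y m (k+1) - Y m k‖ * (‖Y m (k+1) - yn n (t m k)‖ + ε n)^2 := by
            have := mul_le_mul_of_nonneg_left hinn (show (0:ℝ) ≤ 2*r by linarith)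
            calc 2*r*⟪Y m k - Y m (k+1), yn n (t m k) - Y m (k+1)⟫
                ≤ 2*r*(‖Y m (k+1) - Y m k‖ * ε n + (‖Y m (k+1) - Y m k‖/(2*r))
                  * (‖Y m (k+1) - yn n (t m k)‖ + ε n)^2) := this
              _ = 2*r*(‖Y m (k+1) - Y m k‖ * ε n)
                  + ‖Y m (k+1) - Y m k‖ * (‖Y m (k+1) - yn n (t m k)‖ + ε n)^2 := by
                  field_simp <;> ring <;> ring
          have hsq2 : (‖Y m (k+1) - yn n (t m k)‖ + ε n)^2
              ≤ 2*‖Y m (k+1) - yn n (t m k)‖^2 + 2*(ε n)^2 := by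
            nlinarith [sq_nonneg (‖Y m (k+1) - yn n (t m k)‖ - ε n)]
          have hsq2c := mul_le_mul_of_nonneg_left hsq2 hcnn
          have h7 : 2*‖Y m (k+1) - Y m k‖*(ε n)^2
              ≤ (r/2) * (‖Y m (k+1) - Y m k‖ * ε n) := by
            nlinarith [mul_le_mul_of_nonneg_left hεn4 (mul_nonneg hcnn hεnn.le)]
          have h8 : ‖Y m (k+1) - yn n (t m k)‖^2 * (r - 2*‖Y m (k+1) - Y m k‖)
              ≤ r * (‖Y m k - yn n (t m k)‖^2 + 3 * ε n * ‖Y m (k+1) - Y m k‖) := by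
            nlinarith [mul_nonneg hr.le (sq_nonneg (‖Y m (k+1) - Y m k‖)),
              mul_nonneg (mul_nonneg hr.le hcnn) hεnn.le]
          have hr0 : r ≠ 0 := ne_of_gt hr
          calc ‖Y m (k+1) - yn n (t m k)‖^2 * (1 - 2*‖Y m (k+1) - Y m k‖/r)
              = (‖Y m (k+1) - yn n (t m k)‖^2 * (r - 2*‖Y m (k+1) - Y m k‖))/r := by
                field_simp <;> ring
            _ ≤ (r * (‖Y m k - yn n (t m k)‖^2 + 3 * ε n * ‖Y m (k+1) - Y m k‖))/r := by
                rw [div_eq_mul_inv, div_eq_mul_inv]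
                exact mul_le_mul_of_nonneg_right h8 (inv_nonneg.2 hr.le)
            _ = ‖Y m k - yn n (t m k)‖^2 + 3 * ε n * ‖Y m (k+1) - Y m k‖ := by
                field_simp <;> ring
        have hstepA : ‖Y m (k+1) - yn n (t m k)‖^2
            ≤ (‖Y m k - yn n (t m k)‖^2 + 3 * ε n * ‖Y m (k+1) - Y m k‖)
              * Real.exp (2*(2*‖Y m (k+1) - Y m k‖/r)) := by
          refine gron_aux ?_ ?_ hA
          · exact div_nonneg (by linarith) hr.le
          · rw [div_le_iff₀ hr]; linarith
        -- Step B : from ‖p - q‖² to ‖p - q'‖²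
        have hcase : ‖Y m (k+1) - yn n (t m (k+1))‖^2
              * (1 - ‖yn n (t m (k+1)) - yn n (t m k)‖/r)
              ≤ ‖Y m (k+1) - yn n (t m k)‖^2
            ∧ ‖yn n (t m (k+1)) - yn n (t m k)‖ ≤ ε n := by
          rcases lt_or_eq_of_le hτ'j with hlt2 | heq2
          · have hqq : yn n (t m (k+1)) = yn n (t m k) := by
              have := hynstep n j hj1 hjJ (t m (k+1)) ⟨le_trans hjle hττ'.le, hlt2⟩
              rw [this, hq]
            rw [hqq, sub_self, norm_zero]
            constructor
            · simp
            · exact hεnn.le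
          · have hq'P : yn n (t m (k+1)) ∈ projSet (C (t m (k+1))) (yn n (t m k)) := by
              rw [heq2, hgrid n j hjJ, hq]
              exact hYproj n j hj1 hjJ
            have hdval : ‖yn n (t m (k+1)) - yn n (t m k)‖
                = Metric.infDist (yn n (t m k)) (C (t m (k+1))) := hq'P.2
            have hypoB := hypo hr hCpr hq'P (lt_trans hqd (hεr n))
            have hinnB := hypoB (Y m (k+1)) hpC
            have hidB : ‖yn n (t m (k+1)) - Y m (k+1)‖^2
                = ‖yn n (t m k) - Y m (k+1)‖^2 - ‖yn n (t m k) - yn n (t m (k+1))‖^2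
                  + 2*⟪yn n (t m k) - yn n (t m (k+1)), Y m (k+1) - yn n (t m (k+1))⟫ :=
              sq_norm_sub_rel (yn n (t m k)) (yn n (t m (k+1))) (Y m (k+1))
            rw [norm_sub_rev (yn n (t m (k+1))) (Y m (k+1)),
              norm_sub_rev (yn n (t m k)) (Y m (k+1))] at hidB
            rw [norm_sub_rev (yn n (t m (k+1))) (yn n (t m k))] at hdval ⊢
            constructor
            · have hmulB : 2*r*⟪yn n (t m k) - yn n (t m (k+1)), Y m (k+1) - yn n (t m (k+1))⟫
                  ≤ ‖yn n (t m k) - yn n (t m (k+1))‖ * ‖Y m (k+1) - yn n (t m (k+1))‖^2 := by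
                have h := mul_le_mul_of_nonneg_left hinnB (show (0:ℝ) ≤ 2*r by linarith)
                calc 2*r*⟪yn n (t m k) - yn n (t m (k+1)), Y m (k+1) - yn n (t m (k+1))⟫
                    ≤ 2*r*((‖yn n (t m (k+1)) - yn n (t m k)‖/(2*r))
                      * ‖Y m (k+1) - yn n (t m (k+1))‖^2) := h
                  _ = ‖yn n (t m k) - yn n (t m (k+1))‖
                      * ‖Y m (k+1) - yn n (t m (k+1))‖^2 := by
                      rw [norm_sub_rev (yn n (t m (k+1))) (yn n (t m k))]
                      field_simp <;> ring
              have hidBr : r * ‖Y m (k+1) - yn n (t m (k+1))‖^2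
                  = r * ‖Y m (k+1) - yn n (t m k)‖^2
                    - r * ‖yn n (t m k) - yn n (t m (k+1))‖^2
                    + r * (2*⟪yn n (t m k) - yn n (t m (k+1)),
                        Y m (k+1) - yn n (t m (k+1))⟫) := by
                linear_combination r * hidB
              have hpolyB : ‖Y m (k+1) - yn n (t m (k+1))‖^2
                  * (r - ‖yn n (t m k) - yn n (t m (k+1))‖)
                  ≤ r * ‖Y m (k+1) - yn n (t m k)‖^2 := by
                nlinarith [mul_nonneg hr.le (sq_nonneg (‖yn n (t m k) - yn n (t m (k+1))‖))]
              have hr0 : r ≠ 0 := ne_of_gt hr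
              calc ‖Y m (k+1) - yn n (t m (k+1))‖^2
                  * (1 - ‖yn n (t m k) - yn n (t m (k+1))‖/r)
                  = (‖Y m (k+1) - yn n (t m (k+1))‖^2
                    * (r - ‖yn n (t m k) - yn n (t m (k+1))‖))/r := by field_simp <;> ring
                _ ≤ (r * ‖Y m (k+1) - yn n (t m k)‖^2)/r := by
                    rw [div_eq_mul_inv, div_eq_mul_inv]
                    exact mul_le_mul_of_nonneg_right hpolyB (inv_nonneg.2 hr.le)
                _ = ‖Y m (k+1) - yn n (t m k)‖^2 := by field_simp
            · rw [hdval]; exact hqd.le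
        have hdnn : (0:ℝ) ≤ ‖yn n (t m (k+1)) - yn n (t m k)‖ := norm_nonneg _
        have hstepB : ‖Y m (k+1) - yn n (t m (k+1))‖^2
            ≤ ‖Y m (k+1) - yn n (t m k)‖^2
              * Real.exp (2*(‖yn n (t m (k+1)) - yn n (t m k)‖/r)) := by
          refine gron_aux ?_ ?_ hcase.1
          · exact div_nonneg hdnn hr.le
          · rw [div_le_iff₀ hr]; linarith [hcase.2]
        -- combine and conclude the induction step
        have hcomb : ‖Y m (k+1) - yn n (t m (k+1))‖^2
            ≤ (‖Y m k - yn n (t m k)‖^2 + 3 * ε n * ‖Y m (k+1) - Y m k‖)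
              * Real.exp (2*(2*‖Y m (k+1) - Y m k‖/r)
                + 2*(‖yn n (t m (k+1)) - yn n (t m k)‖/r)) := by
          calc ‖Y m (k+1) - yn n (t m (k+1))‖^2
              ≤ ‖Y m (k+1) - yn n (t m k)‖^2
                * Real.exp (2*(‖yn n (t m (k+1)) - yn n (t m k)‖/r)) := hstepB
            _ ≤ ((‖Y m k - yn n (t m k)‖^2 + 3 * ε n * ‖Y m (k+1) - Y m k‖)
                * Real.exp (2*(2*‖Y m (k+1) - Y m k‖/r)))
                * Real.exp (2*(‖yn n (t m (k+1)) - yn n (t m k)‖/r)) :=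
                mul_le_mul_of_nonneg_right hstepA (Real.exp_pos _).le
            _ = _ := by rw [Real.exp_add]; ring
        have hGstep : G (k+1) = G k + (2*(2*‖Y m (k+1) - Y m k‖/r)
            + 2*(‖yn n (t m (k+1)) - yn n (t m k)‖/r)) := by
          rw [hG]; exact Finset.sum_range_succ _ _
        have hSstep : S (k+1) = S k + ‖Y m (k+1) - Y m k‖ := by
          rw [hS]; exact Finset.sum_range_succ _ _
        have hexpG1 : 1 ≤ Real.exp (G k) := Real.one_le_exp (hG0 k)
        have h10 : ‖Y m k - yn n (t m k)‖^2 + 3 * ε n * ‖Y m (k+1) - Y m k‖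
            ≤ Real.exp (G k) * (3 * ε n * S (k+1)) := by
          rw [hSstep]
          have h11 : 3 * ε n * ‖Y m (k+1) - Y m k‖
              ≤ Real.exp (G k) * (3 * ε n * ‖Y m (k+1) - Y m k‖) := by
            nlinarith [mul_nonneg (show (0:ℝ) ≤ 3 * ε n by linarith) hcnn]
          calc ‖Y m k - yn n (t m k)‖^2 + 3 * ε n * ‖Y m (k+1) - Y m k‖
              ≤ Real.exp (G k) * (3 * ε n * S k)
                + Real.exp (G k) * (3 * ε n * ‖Y m (k+1) - Y m k‖) := add_le_add IH h11
            _ = Real.exp (G k) * (3 * ε n * (S k + ‖Y m (k+1) - Y m k‖)) := by ring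
        calc ‖Y m (k+1) - yn n (t m (k+1))‖^2
            ≤ (‖Y m k - yn n (t m k)‖^2 + 3 * ε n * ‖Y m (k+1) - Y m k‖)
              * Real.exp (2*(2*‖Y m (k+1) - Y m k‖/r)
                + 2*(‖yn n (t m (k+1)) - yn n (t m k)‖/r)) := hcomb
          _ ≤ (Real.exp (G k) * (3 * ε n * S (k+1)))
              * Real.exp (2*(2*‖Y m (k+1) - Y m k‖/r)
                + 2*(‖yn n (t m (k+1)) - yn n (t m k)‖/r)) :=
              mul_le_mul_of_nonneg_right h10 (Real.exp_pos _).le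
          _ = Real.exp (G (k+1)) * (3 * ε n * S (k+1)) := by
              rw [hGstep]; simp only [Real.exp_add]; ring
    -- conclude from the invariant
    intro k hk
    have h1 := inv k hk
    have hSle : S k ≤ V := by
      have hb := hsum (yn m) (hV m) m k hk
      have heq : S k = ∑ i ∈ Finset.range k, ‖yn m (t m (i+1)) - yn m (t m i)‖ := by
        simp only [hS]
        refine Finset.sum_congr rfl fun i hi => ?_
        have hik : i < k := Finset.mem_range.1 hi
        rw [hgrid m (i+1) (by omega), hgrid m i (by omega)]
      rw [heq]; exact hb
    have hDle : D k ≤ V := hsum (yn n) (hV n) m k hk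
    have hGle : G k ≤ 6*V/r := by
      have hGeq : G k = (4*S k + 2*D k)/r := by
        simp only [hG, hS, hD]
        rw [Finset.sum_congr rfl (fun i (_ : i ∈ Finset.range k) =>
          (show 2*(2*‖Y m (i+1) - Y m i‖/r) + 2*(‖yn n (t m (i+1)) - yn n (t m i)‖/r)
            = (4*‖Y m (i+1) - Y m i‖ + 2*‖yn n (t m (i+1)) - yn n (t m i)‖)/r by ring))]
        rw [← Finset.sum_div, Finset.sum_add_distrib, ← Finset.mul_sum, ← Finset.mul_sum]
      rw [hGeq]
      have h2 : 4*S k + 2*D k ≤ 6*V := by linarith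
      rw [div_eq_mul_inv, div_eq_mul_inv]
      exact mul_le_mul_of_nonneg_right h2 (inv_nonneg.2 hr.le)
    have hfin : Real.exp (G k) * (3 * ε n * S k) ≤ Real.exp (6*V/r) * (3 * ε n * V) := by
      have e1 : Real.exp (G k) ≤ Real.exp (6*V/r) := Real.exp_le_exp.2 hGle
      have e2 : 3 * ε n * S k ≤ 3 * ε n * V :=
        mul_le_mul_of_nonneg_left hSle (by linarith [hεpos n])
      have e3 : (0:ℝ) ≤ 3 * ε n * S k :=
        mul_nonneg (by linarith [hεpos n]) (hS0 k)
      exact mul_le_mul e1 e2 e3 (Real.exp_pos _).le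
    exact h1.trans hfin
  set B : ℕ → ℝ := fun n => Real.sqrt (Real.exp (6*V/r) * (3 * ε n * V)) with hB
  have hBnn : ∀ n, 0 ≤ B n := fun n => Real.sqrt_nonneg _
  have hBto : Tendsto B atTop (𝓝 0) := by
    have h1 : Tendsto (fun n => Real.exp (6*V/r) * (3 * ε n * V)) atTop (𝓝 0) := by
      have h2 : Tendsto (fun n => ε n * (3 * V * Real.exp (6*V/r))) atTop
          (𝓝 (0 * (3 * V * Real.exp (6*V/r)))) := hεto.mul_const _
      rw [zero_mul] at h2
      convert h2 using 2 with n
      ring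
    have := (Real.continuous_sqrt.tendsto' 0 0 Real.sqrt_zero).comp h1
    exact this
  -- sup bound between yn m and yn n
  have keysup : ∀ n, N ≤ n → ∀ m, n ≤ m → ∀ s, s ∈ I → ‖yn m s - yn n s‖ ≤ B n := by
    intro n hn m hnm s hs
    have hsq : ∀ k, k ≤ J m → ‖Y m k - yn n (t m k)‖ ≤ B n := by
      intro k hk
      rw [hB]
      rw [Real.le_sqrt (norm_nonneg _) (by have h1 := hεpos n; have h2 := hVnn; positivity)]
      exact key n hn m hnm k hk
    rcases eq_or_lt_of_le hs.2 with h | h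
    · have e1 : yn m s = Y m (J m) := by rw [h]; exact hynT m
      have e2 : yn n s = yn n (t m (J m)) := by rw [h, htJ]
      rw [e1, e2]
      exact hsq (J m) le_rfl
    · obtain ⟨k, hk1, hkJ, hkle, hklt, hq⟩ := hloc m s hs.1 h
      have hk' : k - 1 + 1 = k := by omega
      have e2 : yn n s = yn n (t m (k-1)) :=
        hsame n m hnm (k-1) (by omega) s hkle (by rw [hk']; exact hklt)
      rw [hq, e2]
      exact hsq (k-1) (by omega)
  -- pointwise limits
  have hconv : ∀ s : ℝ, ∃ l : H, s ∈ I → Tendsto (fun k => yn k s) atTop (𝓝 l) := by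
    intro s
    by_cases hs : s ∈ I
    · have hc : CauchySeq (fun k => yn k s) := by
        rw [Metric.cauchySeq_iff']
        intro ε' hε'
        obtain ⟨n, hn1, hn2⟩ := ((hBto.eventually_lt_const hε').and (eventually_ge_atTop N)).exists
        refine ⟨n, fun m hm => ?_⟩
        rw [dist_eq_norm]
        exact lt_of_le_of_lt (keysup n hn2 m hm s hs) hn1
      obtain ⟨l, hl⟩ := cauchySeq_tendsto_of_complete hc
      exact ⟨l, fun _ => hl⟩
    · exact ⟨y₀, fun h => absurd h hs⟩
  choose y hy using hconv
  have hbound : ∀ n, N ≤ n → ∀ s, s ∈ I → ‖y s - yn n s‖ ≤ B n := by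
    intro n hn s hs
    have h1 : Tendsto (fun m => ‖yn m s - yn n s‖) atTop (𝓝 ‖y s - yn n s‖) :=
      ((hy s hs).sub_const (yn n s)).norm
    refine le_of_tendsto h1 ?_
    filter_upwards [eventually_ge_atTop n] with m hm
    exact keysup n hn m hm s hs
  -- the five conclusions
  have hy0 : y 0 = y₀ := by
    have h0I : (0:ℝ) ∈ I := ⟨le_rfl, hT.le⟩
    have h1 : Tendsto (fun k => yn k 0) atTop (𝓝 (y 0)) := hy 0 h0I
    have h2 : (fun k => yn k 0) = fun _ => y₀ := funext fun k => hyn0 k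
    rw [h2] at h1
    exact tendsto_nhds_unique h1 tendsto_const_nhds
  have huniform : TendstoUniformlyOn yn y atTop I := by
    rw [Metric.tendstoUniformlyOn_iff]
    intro ε' hε'
    have h1 : ∀ᶠ n in atTop, B n < ε' := hBto.eventually_lt_const hε'
    filter_upwards [h1, eventually_ge_atTop N] with n h1 h2 x hx
    rw [dist_eq_norm]
    exact lt_of_le_of_lt (hbound n h2 x hx) h1
  have hdistC : ∀ n s, s ∈ I → Metric.infDist (yn n s) (C s) ≤ ε n := by
    intro n s hs
    rcases eq_or_lt_of_le hs.2 with h | h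
    · have e1 : yn n s = Y n (J n) := by rw [h]; exact hynT n
      have hmem : Y n (J n) ∈ C s := by
        rw [h, ← htJ n]; exact hYmem n (J n) le_rfl
      rw [e1, Metric.infDist_zero_of_mem hmem]
      exact (hεpos n).le
    · obtain ⟨j, hj1, hjJ, hjle, hjlt, hq⟩ := hloc n s hs.1 h
      rw [hq]
      refine (infDist_lt_of_excess_lt (hYmem n (j-1) (by omega)) ?_).le
      refine hδε n (t n (j-1)) s (htnn n (j-1) (by omega)) hjle hs.2 ?_
      have hmesh := htmesh n (j-1) (by omega)
      have hj' : j - 1 + 1 = j := by omega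
      rw [hj'] at hmesh
      linarith
  have hmemC : ∀ s ∈ I, y s ∈ C s := by
    intro s hs
    have h0 : Metric.infDist (y s) (C s) ≤ 0 := by
      have h1 : Tendsto (fun n => B n + ε n) atTop (𝓝 0) := by
        simpa using hBto.add hεto
      refine ge_of_tendsto h1 ?_
      filter_upwards [eventually_ge_atTop N] with n hn
      calc Metric.infDist (y s) (C s)
          ≤ Metric.infDist (yn n s) (C s) + dist (y s) (yn n s) :=
            Metric.infDist_le_infDist_add_dist
        _ ≤ ε n + B n := add_le_add (hdistC n s hs) (by rw [dist_eq_norm]; exact hbound n hn s hs)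
        _ = B n + ε n := by ring
    have h2 : Metric.infDist (y s) (C s) = 0 := le_antisymm h0 Metric.infDist_nonneg
    exact ((hC s hs).1.mem_iff_infDist_zero (hC s hs).2.1).2 h2
  -- oscillation lemma for continuity
  have hosc : ∀ n s, s ∈ I → ∃ η > 0, ∀ s' ∈ I, |s' - s| < η → ‖yn n s' - yn n s‖ ≤ ε n := by
    intro n s hs
    rcases eq_or_lt_of_le hs.2 with hsT | hsT
    · -- s = T
      have hlt : t n (J n - 1) < T := by
        have := hstrict n (J n - 1) (J n) (by have := hJ n; omega) le_rfl
        rwa [htJ] at this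
      refine ⟨T - t n (J n - 1), by linarith, ?_⟩
      intro s' hs' hd
      rcases eq_or_lt_of_le hs'.2 with h' | h'
      · rw [hsT, h', sub_self, norm_zero]; exact (hεpos n).le
      · have hge : t n (J n - 1) ≤ s' := by
          rw [hsT, abs_sub_lt_iff] at hd
          linarith [hd.2]
        have e1 : yn n s' = Y n (J n - 1) := by
          have := hynstep n (J n) (hJ n) le_rfl s' ⟨hge, by rw [htJ]; exact h'⟩
          exact this
        have e2 : yn n s = Y n (J n) := by rw [hsT]; exact hynT n
        rw [e1, e2, norm_sub_rev]
        have hj := hjump n (J n) (hJ n) le_rfl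
        rw [hj.1]
        exact hj.2.le
    · obtain ⟨j, hj1, hjJ, hjle, hjlt, hq⟩ := hloc n s hs.1 hsT
      rcases eq_or_lt_of_le hjle with heq | hlt
      · -- s = t n (j-1) is a grid point
        by_cases hj2 : 2 ≤ j
        · have hprev : t n (j-2) < s := by
            rw [← heq]
            exact hstrict n (j-2) (j-1) (by omega) (by omega)
          refine ⟨min (t n j - s) (s - t n (j-2)), by
            apply lt_min (by linarith) (by linarith), ?_⟩
          intro s' hs' hd
          rw [abs_sub_lt_iff, lt_min_iff, lt_min_iff] at hd
          rcases le_or_gt s s' with hss | hss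
          · have e1 : yn n s' = Y n (j-1) :=
              hynstep n j hj1 hjJ s' ⟨heq ▸ hss, by linarith [hd.1.1]⟩
            rw [e1, hq, sub_self, norm_zero]; exact (hεpos n).le
          · have h2 : t n (j-2) ≤ s' := by linarith [hd.2.2]
            have h3 : s' < t n (j-1) := by rw [heq]; exact hss
            have e1 : yn n s' = Y n (j-2) := by
              have hje : j - 1 - 1 = j - 2 := by omega
              have := hynstep n (j-1) (by omega) (by omega) s' ⟨by rw [hje]; exact h2, h3⟩
              rw [hje] at this
              exact this
            rw [e1, hq, norm_sub_rev]
            have hj' := hjump n (j-1) (by omega) (by omega)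
            have hje : j - 1 - 1 = j - 2 := by omega
            rw [hje] at hj'
            rw [hj'.1]
            exact lt_of_lt_of_le hj'.2 (le_of_eq rfl) |>.le
        · -- j = 1, so s = 0
          have hj1' : j = 1 := by omega
          refine ⟨t n j - s, by linarith, ?_⟩
          intro s' hs' hd
          have hs0 : s = 0 := by
            rw [← heq, hj1']
            simpa using (ht0 n).symm ▸ rfl
          have hss : s ≤ s' := by rw [hs0]; exact hs'.1
          rw [abs_sub_lt_iff] at hd
          have e1 : yn n s' = Y n (j-1) :=
            hynstep n j hj1 hjJ s' ⟨heq ▸ hss, by linarith [hd.1]⟩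
          rw [e1, hq, sub_self, norm_zero]; exact (hεpos n).le
      · -- interior point
        refine ⟨min (t n j - s) (s - t n (j-1)), by
          apply lt_min (by linarith) (by linarith), ?_⟩
        intro s' hs' hd
        rw [abs_sub_lt_iff, lt_min_iff, lt_min_iff] at hd
        have e1 : yn n s' = Y n (j-1) :=
          hynstep n j hj1 hjJ s' ⟨by linarith [hd.2.2], by linarith [hd.1.1]⟩
        rw [e1, hq, sub_self, norm_zero]; exact (hεpos n).le
  have hcontinuous : ContinuousOn y I := by
    intro s hs
    rw [Metric.continuousWithinAt_iff]
    intro ε' hε'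
    have h1 : Tendsto (fun n => 2 * B n + ε n) atTop (𝓝 0) := by
      simpa using ((hBto.const_mul 2).add hεto)
    obtain ⟨n, hn1, hn2⟩ := ((h1.eventually_lt_const hε').and (eventually_ge_atTop N)).exists
    obtain ⟨η, hη, hηs⟩ := hosc n s hs
    refine ⟨η, hη, fun s' hs' hd => ?_⟩
    have e1 : ‖y s' - yn n s'‖ ≤ B n := hbound n hn2 s' hs'
    have e2 : ‖y s - yn n s‖ ≤ B n := hbound n hn2 s hs
    have e3 : ‖yn n s' - yn n s‖ ≤ ε n := hηs s' hs' (by rwa [Real.dist_eq] at hd)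
    rw [dist_eq_norm]
    have : y s' - y s = (y s' - yn n s') + (yn n s' - yn n s) + (yn n s - y s) := by abel
    rw [this]
    calc ‖(y s' - yn n s') + (yn n s' - yn n s) + (yn n s - y s)‖
        ≤ ‖(y s' - yn n s') + (yn n s' - yn n s)‖ + ‖yn n s - y s‖ := norm_add_le _ _
      _ ≤ ‖y s' - yn n s'‖ + ‖yn n s' - yn n s‖ + ‖yn n s - y s‖ := by
          have := norm_add_le (y s' - yn n s') (yn n s' - yn n s); linarith
      _ ≤ B n + ε n + B n := by
          refine add_le_add (add_le_add e1 e3) ?_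
          rw [norm_sub_rev]; exact e2
      _ < ε' := by linarith
  have hBV : BoundedVariationOn y I := by
    have hle : eVariationOn y I ≤ ENNReal.ofReal V := by
      by_contra hgt
      push_neg at hgt
      have h1 : ∀ x ∈ I, Tendsto (fun i => yn i x) atTop (𝓝 (y x)) := fun x hx => hy x hx
      have h2 := eVariationOn.lowerSemicontinuous_aux h1 hgt
      obtain ⟨n, hn⟩ := h2.exists
      exact absurd (hV n) (not_le.2 hn)
    exact fun h => absurd (h ▸ hle) (by simp)
  exact ⟨y, hcontinuous, hBV, hy0, hmemC, huniform⟩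
end

section
/- Variational inequality characterization of normal vectors to prox-regular sets: let K be an r-prox-regular closed subset of a real Hilbert space H, x ∈ K, and v ∈ H. If −v ∈ N_K(x), then ⟨−v, z − x⟩ ≤ (‖v‖/(2r))‖z−x‖² for all z ∈ K. Conversely, if there is σ ≥ 0 with ⟨−v, z − x⟩ ≤ σ‖z−x‖² for all z ∈ K, then −v ∈ N_K(x). -/
open Metric Set
open scoped RealInnerProductSpace

variable {H : Type*} [NormedAddCommGroup H] [InnerProductSpace ℝ H]

lemma mem_projSet_iff {K : Set H} (hKne : K.Nonempty) {x y : H} :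
    x ∈ projSet K y ↔ x ∈ K ∧ ∀ z ∈ K, ‖x - y‖ ≤ ‖z - y‖ := by
  constructor
  · rintro ⟨hxK, hd⟩
    refine ⟨hxK, fun z hz => ?_⟩
    rw [hd]
    calc Metric.infDist y K ≤ dist y z := Metric.infDist_le_dist_of_mem hz
    _ = ‖z - y‖ := by rw [dist_eq_norm, norm_sub_rev]
  · rintro ⟨hxK, hle⟩
    refine ⟨hxK, le_antisymm ?_ ?_⟩
    · by_contra h
      push_neg at h
      obtain ⟨z, hz, hdz⟩ := (Metric.infDist_lt_iff hKne).1 h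
      rw [dist_eq_norm, norm_sub_rev] at hdz
      exact absurd (hle z hz) (not_le.2 hdz)
    · calc Metric.infDist y K ≤ dist y x := Metric.infDist_le_dist_of_mem hxK
      _ = ‖x - y‖ := by rw [dist_eq_norm, norm_sub_rev]

set_option maxHeartbeats 800000 in
theorem stmt_17 [CompleteSpace H] (r : ℝ) (hr : 0 < r) (K : Set H)
    (hK : IsClosed K) (hKne : K.Nonempty) (hreg : IsProxRegular r K)
    (x : H) (hx : x ∈ K) (v : H) :
    (-v ∈ proxNormalCone K x →
        ∀ z ∈ K, (inner ℝ (-v) (z - x) : ℝ) ≤ (‖v‖ / (2 * r)) * ‖z - x‖ ^ 2) ∧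
      ((∃ σ : ℝ, 0 ≤ σ ∧ ∀ z ∈ K, (inner ℝ (-v) (z - x) : ℝ) ≤ σ * ‖z - x‖ ^ 2) →
        -v ∈ proxNormalCone K x) := by
  constructor
  · rintro ⟨l, hl, y, hproj, hv⟩ z hz
    by_cases hv0 : v = 0
    · subst hv0
      simp only [neg_zero, inner_zero_left, norm_zero]
      positivity
    have hyx : y ≠ x := by
      rintro rfl
      rw [sub_self, smul_zero] at hv
      exact hv0 (by simpa using hv.symm)
    have hd : 0 < ‖y - x‖ := norm_pos_iff.2 (sub_ne_zero.2 hyx)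
    have hl0 : 0 < l := by
      rcases hl.lt_or_eq with h | h
      · exact h
      · rw [← h, zero_smul] at hv
        exact absurd (by simpa using hv.symm) hv0
    set d := ‖y - x‖ with hdval
    set s : ℝ := min 1 (r / (2 * d)) with hs
    have hs0 : 0 < s := lt_min one_pos (by positivity)
    have hs1 : s ≤ 1 := min_le_left _ _
    have hsr : s * d ≤ r / 2 := by
      have h2 : s ≤ r / (2 * d) := min_le_right _ _
      calc s * d ≤ (r / (2 * d)) * d := by nlinarith
      _ = r / 2 := by field_simp
    set y' := x + s • (y - x) with hy'
    have hy'x : y' - x = s • (y - x) := by rw [hy']; abel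
    have hny' : ‖y' - x‖ = s * d := by
      rw [hy'x, norm_smul, Real.norm_of_nonneg hs0.le]
    have hxy : ∀ w ∈ K, ‖x - y‖ ≤ ‖w - y‖ := ((mem_projSet_iff hKne).1 hproj).2
    have hxd : ‖x - y‖ = d := norm_sub_rev x y
    have hproj' : x ∈ projSet K y' := by
      rw [mem_projSet_iff hKne]
      refine ⟨hx, fun w hw => ?_⟩
      have h1 : ‖x - y'‖ = s * d := by rw [norm_sub_rev, hny']
      have h2 : ‖y' - y‖ = (1 - s) * d := by
        have he : y' - y = (1 - s) • (x - y) := by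
          rw [hy']; module
        rw [he, norm_smul, Real.norm_of_nonneg (by linarith), hxd]
      have h3 : d ≤ ‖w - y‖ := hxd ▸ hxy w hw
      have h4 : ‖w - y‖ ≤ ‖w - y'‖ + ‖y' - y‖ := norm_sub_le_norm_sub_add_norm_sub w y' y
      rw [h1]; linarith
    have hinf : Metric.infDist y' K = s * d := by
      rw [← hproj'.2, norm_sub_rev, hny']
    have hkey := (hreg y' (by rw [hinf]; positivity)
      (by rw [hinf]; linarith)).2 x hproj'
    have heq : (r / ‖y' - x‖) • (y' - x) = (r / d) • (y - x) := by
      rw [hny', hy'x, smul_smul]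
      congr 1
      field_simp
    rw [heq] at hkey
    set p := x + (r / d) • (y - x) with hp
    have hpx : ‖x - p‖ = r := by
      have : x - p = -((r / d) • (y - x)) := by rw [hp]; abel
      rw [this, norm_neg, norm_smul, Real.norm_of_nonneg (by positivity)]
      field_simp
      exact hdval.symm
    have hle : r ≤ ‖z - p‖ := by
      rw [← hpx]
      exact ((mem_projSet_iff hKne).1 hkey).2 z hz
    have hsq : r ^ 2 ≤ ‖z - p‖ ^ 2 := by nlinarith [norm_nonneg (z - p)]
    have hzp : ‖z - p‖ ^ 2
        = ‖z - x‖ ^ 2 - 2 * (r / d) * inner ℝ (z - x) (y - x) + r ^ 2 := by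
      have he : z - p = (z - x) - (r / d) • (y - x) := by rw [hp]; abel
      rw [he, norm_sub_sq_real, real_inner_smul_right, norm_smul,
        Real.norm_of_nonneg (by positivity : (0:ℝ) ≤ r / d)]
      have : (r / d * ‖y - x‖) ^ 2 = r ^ 2 := by
        rw [← hdval]; field_simp
      rw [mul_pow, ← hdval]
      field_simp
    have hI : 2 * r * inner ℝ (z - x) (y - x) ≤ d * ‖z - x‖ ^ 2 := by
      have h5 : 2 * (r / d) * inner ℝ (z - x) (y - x) ≤ ‖z - x‖ ^ 2 := by linarith
      have := mul_le_mul_of_nonneg_left h5 hd.le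
      calc 2 * r * (inner ℝ (z - x) (y - x) : ℝ)
          = d * (2 * (r / d) * inner ℝ (z - x) (y - x)) := by field_simp
        _ ≤ d * ‖z - x‖ ^ 2 := this
    have hvnorm : ‖v‖ = l * d := by
      rw [← norm_neg v, hv, norm_smul, Real.norm_of_nonneg hl]
    have hinner : (inner ℝ (-v) (z - x) : ℝ) = l * inner ℝ (y - x) (z - x) := by
      rw [hv, real_inner_smul_left]
    rw [hinner, hvnorm, real_inner_comm (z - x) (y - x)]
    rw [div_mul_eq_mul_div, le_div_iff₀ (by positivity)]
    nlinarith [mul_le_mul_of_nonneg_left hI hl]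
  · rintro ⟨σ, hσ, hineq⟩
    by_cases hv0 : v = 0
    · exact ⟨0, le_refl 0, x,
        ⟨hx, by rw [sub_self, norm_zero, Metric.infDist_zero_of_mem hx]⟩,
        by simp [hv0]⟩
    set t : ℝ := 1 / (2 * σ + 1) with ht
    have ht0 : 0 < t := by positivity
    have h21 : (0:ℝ) < 2 * σ + 1 := by linarith
    have hts : 2 * t * σ ≤ 1 := by
      rw [ht, mul_one_div, div_mul_eq_mul_div, div_le_one h21]
      linarith
    refine ⟨1 / t, by positivity, x - t • v, ?_, ?_⟩
    · rw [mem_projSet_iff hKne]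
      refine ⟨hx, fun w hw => ?_⟩
      have h1 : ‖x - (x - t • v)‖ = t * ‖v‖ := by
        rw [sub_sub_cancel, norm_smul, Real.norm_of_nonneg ht0.le]
      have h2 : ‖w - (x - t • v)‖ ^ 2
          = ‖w - x‖ ^ 2 + 2 * t * inner ℝ (w - x) v + t ^ 2 * ‖v‖ ^ 2 := by
        have he : w - (x - t • v) = (w - x) + t • v := by module
        rw [he, norm_add_sq_real, real_inner_smul_right, norm_smul,
          Real.norm_of_nonneg ht0.le]
        ring
      have h3 := hineq w hw
      rw [inner_neg_left] at h3
      have h4 : (inner ℝ (w - x) v : ℝ) ≥ -σ * ‖w - x‖ ^ 2 := by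
        rw [real_inner_comm]; linarith
      have h5 : t * ‖v‖ ≤ ‖w - (x - t • v)‖ := by
        nlinarith [norm_nonneg (w - (x - t • v)), norm_nonneg (w - x), sq_nonneg ‖w - x‖]
      rw [h1]; exact h5
    · have he : x - t • v - x = -(t • v) := by abel
      rw [he, smul_neg, smul_smul, one_div_mul_cancel ht0.ne', one_smul]
end
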